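/- Let a₁(x) ≥ ... ≥ a_k(x) be continuous on [b,c], a₀=+∞, a_{k+1}=−∞, and let U(h,x) be such that for each j, ∂U/∂h = c_j whenever a_{j+1}(x) < h < a_j(x), where c₀ > c₁ > ... > c_k is strictly decreasing, and U(·,x) is continuous and piecewise linear in h. Fix A ∈ ℝ and j with ∫_b^c a_{j+1} ≤ A ≤ ∫_b^c a_j. Then among all continuous h on [b,c] with ∫_b^c h = A, the functional I[h] = ∫_b^c U(h(x),x) dx attains its minimum exactly at those h satisfying a_{j+1}(x) ≤ h(x) ≤ a_j(x) for all x, and the minimum value is ∫_b^c U(a_{j+1}(x),x) dx + c_j (A − ∫_b^c a_{j+1}(x) dx). -/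

import Mathlib

open Set MeasureTheory intervalIntegral

private lemma cs_lt_aux (k : ℕ) (cs : ℕ → ℝ) (hcs : ∀ i, i < k → cs (i + 1) < cs i) :
    ∀ m n, m < n → n ≤ k → cs n < cs m := by
  intro m n hmn hnk
  induction n with
  | zero => omega
  | succ p ih =>
    have hp : cs (p + 1) < cs p := hcs p (by omega)
    rcases Nat.lt_or_ge m p with h | h
    · exact hp.trans (ih (by omega) (by omega))
    · have hmp : m = p := by omega
      subst hmp; exact hp

private lemma strip_pointwise (k : ℕ) (α : ℕ → ℝ) (cs : ℕ → ℝ) (F : ℝ → ℝ)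
    (hF : Continuous F)
    (hαmono : ∀ i, 1 ≤ i → i < k → α (i + 1) ≤ α i)
    (hcs : ∀ i, i < k → cs (i + 1) < cs i)
    (htop : ∀ y : ℝ, α 1 < y → HasDerivAt F (cs 0) y)
    (hmid : ∀ i, 1 ≤ i → i < k → ∀ y : ℝ, α (i + 1) < y → y < α i → HasDerivAt F (cs i) y)
    (hbot : ∀ y : ℝ, y < α k → HasDerivAt F (cs k) y)
    (j : ℕ) (hj1 : 1 ≤ j) (hjk : j < k) (y : ℝ) :
    F (α (j + 1)) + cs j * (y - α (j + 1)) ≤ F y ∧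
      (F (α (j + 1)) + cs j * (y - α (j + 1)) = F y ↔ α (j + 1) ≤ y ∧ y ≤ α j) := by
  set G : ℝ → ℝ := fun z => F z - cs j * z with hG
  have hGc : Continuous G := hF.sub (continuous_const.mul continuous_id)
  have hGd : ∀ (c : ℝ) (z : ℝ), HasDerivAt F c z → HasDerivAt G (c - cs j) z := by
    intro c z hz
    have := hz.sub ((hasDerivAt_id' z).const_mul (cs j)); rw [mul_one] at this; exact this
  have up : ∀ i, 1 ≤ i → i ≤ j → StrictMonoOn G (Ici (α i)) := by
    intro i hi1
    induction i, hi1 using Nat.le_induction with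
    | base =>
      intro _
      apply strictMonoOn_of_deriv_pos (convex_Ici _) hGc.continuousOn
      intro z hz
      rw [interior_Ici] at hz
      rw [(hGd _ z (htop z hz)).deriv]
      have := cs_lt_aux k cs hcs 0 j (by omega) hjk.le
      linarith
    | succ n hn ih =>
      intro hnj
      have hnj' : n < j := by omega
      have hk : n < k := by omega
      have hle : α (n + 1) ≤ α n := hαmono n hn hk
      have h₁ : StrictMonoOn G (Icc (α (n + 1)) (α n)) := by
        apply strictMonoOn_of_deriv_pos (convex_Icc _ _) hGc.continuousOn
        intro z hz
        rw [interior_Icc] at hz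
        rw [(hGd _ z (hmid n hn hk z hz.1 hz.2)).deriv]
        have := cs_lt_aux k cs hcs n j hnj' hjk.le
        linarith
      have hu := h₁.union (ih (by omega)) (isGreatest_Icc hle) isLeast_Ici
      rwa [Icc_union_Ici_eq_Ici hle] at hu
  have down : ∀ d, d + (j + 1) ≤ k → StrictAntiOn G (Iic (α (k - d))) := by
    intro d
    induction d with
    | zero =>
      intro _
      simp only [Nat.sub_zero]
      apply strictAntiOn_of_deriv_neg (convex_Iic _) hGc.continuousOn
      intro z hz
      rw [interior_Iic] at hz
      rw [(hGd _ z (hbot z hz)).deriv]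
      have := cs_lt_aux k cs hcs j k hjk le_rfl
      linarith
    | succ d ih =>
      intro hd
      have hik : k - (d + 1) < k := by omega
      set i := k - (d + 1) with hi
      have hi1 : 1 ≤ i := by omega
      have hji : j < i := by omega
      have hsucc : i + 1 = k - d := by omega
      have hle : α (i + 1) ≤ α i := hαmono i hi1 hik
      have h₂ : StrictAntiOn G (Icc (α (i + 1)) (α i)) := by
        apply strictAntiOn_of_deriv_neg (convex_Icc _ _) hGc.continuousOn
        intro z hz
        rw [interior_Icc] at hz
        rw [(hGd _ z (hmid i hi1 hik z hz.1 hz.2)).deriv]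
        have := cs_lt_aux k cs hcs j i hji hik.le
        linarith
      have h₁ : StrictAntiOn G (Iic (α (i + 1))) := by
        rw [hsucc]; exact ih (by omega)
      have hu := h₁.union h₂ isGreatest_Iic (isLeast_Icc hle)
      rwa [Iic_union_Icc_eq_Iic hle] at hu
  have hdown : StrictAntiOn G (Iic (α (j + 1))) := by
    have h := down (k - (j + 1)) (by omega)
    have he : k - (k - (j + 1)) = j + 1 := by omega
    rwa [he] at h
  have hup : StrictMonoOn G (Ici (α j)) := up j hj1 le_rfl
  have hstrip_le : α (j + 1) ≤ α j := hαmono j hj1 hjk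
  have hderiv0 : ∀ z ∈ interior (Icc (α (j + 1)) (α j)), deriv G z = 0 := by
    rw [interior_Icc]; intro z hz
    rw [(hGd _ z (hmid j hj1 hjk z hz.1 hz.2)).deriv, sub_self]
  have hdiff : DifferentiableOn ℝ G (interior (Icc (α (j + 1)) (α j))) := by
    rw [interior_Icc]
    intro z hz
    exact ((hGd _ z (hmid j hj1 hjk z hz.1 hz.2)).differentiableAt).differentiableWithinAt
  have hmono := monotoneOn_of_deriv_nonneg (convex_Icc _ _) hGc.continuousOn hdiff
    (fun z hz => (hderiv0 z hz).ge)
  have hanti := antitoneOn_of_deriv_nonpos (convex_Icc _ _) hGc.continuousOn hdiff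
    (fun z hz => (hderiv0 z hz).le)
  have hmemL : α (j + 1) ∈ Icc (α (j + 1)) (α j) := ⟨le_rfl, hstrip_le⟩
  have hconst : ∀ z ∈ Icc (α (j + 1)) (α j), G z = G (α (j + 1)) :=
    fun z hz => le_antisymm (hanti hmemL hz hz.1) (hmono hmemL hz hz.1)
  have keyL : ∀ z : ℝ, z < α (j + 1) → G (α (j + 1)) < G z := fun z hz =>
    hdown (mem_Iic.mpr hz.le) (mem_Iic.mpr le_rfl) hz
  have keyR : ∀ z : ℝ, α j < z → G (α (j + 1)) < G z := by
    intro z hz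
    have h1 : G (α j) < G z := hup (mem_Ici.mpr le_rfl) (mem_Ici.mpr hz.le) hz
    have h2 : G (α j) = G (α (j + 1)) := hconst (α j) ⟨hstrip_le, le_rfl⟩
    linarith
  have hge : ∀ z : ℝ, G (α (j + 1)) ≤ G z := by
    intro z
    rcases lt_or_ge z (α (j + 1)) with h | h
    · exact (keyL z h).le
    · rcases le_or_gt z (α j) with h' | h'
      · exact (hconst z ⟨h, h'⟩).ge
      · exact (keyR z h').le
  have hGF : ∀ z : ℝ, G z - G (α (j + 1))
      = F z - (F (α (j + 1)) + cs j * (z - α (j + 1))) := by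
    intro z; simp only [hG]; ring
  constructor
  · linarith [hGF y, hge y]
  · constructor
    · intro heq
      have hGy : G y = G (α (j + 1)) := by linarith [hGF y]
      constructor
      · by_contra hc
        push_neg at hc
        exact absurd hGy (ne_of_gt (keyL y hc))
      · by_contra hc
        push_neg at hc
        exact absurd hGy (ne_of_gt (keyR y hc))
    · intro hy
      have := hconst y hy
      linarith [hGF y]

/-- Optimality part of the strip theorem. The interval is `[b, q]`, the ordered curves are
`a 1 ≥ a 2 ≥ ... ≥ a k` (with `a 0 = +∞`, `a (k+1) = -∞` understood as absence of a bound),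
and `cs 0 > cs 1 > ... > cs k` are the slopes of the convex piecewise-linear potential `U`. -/
theorem stmt_9 (b q : ℝ) (hbq : b < q) (k : ℕ)
    (a : ℕ → ℝ → ℝ) (cs : ℕ → ℝ)
    (U : ℝ → ℝ → ℝ)
    (hUcont : Continuous (fun p : ℝ × ℝ => U p.1 p.2))
    (hacont : ∀ i, 1 ≤ i → i ≤ k → ContinuousOn (a i) (Set.Icc b q))
    (hamono : ∀ i, 1 ≤ i → i < k → ∀ x ∈ Set.Icc b q, a (i + 1) x ≤ a i x)
    (hcs : ∀ i, i < k → cs (i + 1) < cs i)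
    (hslope_top : ∀ x ∈ Set.Icc b q, ∀ h : ℝ, 1 ≤ k → a 1 x < h →
      HasDerivAt (fun y => U y x) (cs 0) h)
    (hslope_mid : ∀ i, 1 ≤ i → i < k → ∀ x ∈ Set.Icc b q, ∀ h : ℝ,
      a (i + 1) x < h → h < a i x → HasDerivAt (fun y => U y x) (cs i) h)
    (hslope_bot : ∀ x ∈ Set.Icc b q, ∀ h : ℝ, 1 ≤ k → h < a k x →
      HasDerivAt (fun y => U y x) (cs k) h)
    (A : ℝ) (j : ℕ) (hj1 : 1 ≤ j) (hjk : j < k)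
    (hA1 : (∫ x in b..q, a (j + 1) x) ≤ A) (hA2 : A ≤ ∫ x in b..q, a j x) :
    (∀ h : ℝ → ℝ, ContinuousOn h (Set.Icc b q) → (∫ x in b..q, h x) = A →
      ((∫ x in b..q, U (h x) x)
          = (∫ x in b..q, U (a (j + 1) x) x) + cs j * (A - ∫ x in b..q, a (j + 1) x)
        ↔ ∀ x ∈ Set.Icc b q, a (j + 1) x ≤ h x ∧ h x ≤ a j x)) ∧
    (∀ h : ℝ → ℝ, ContinuousOn h (Set.Icc b q) → (∫ x in b..q, h x) = A →
      (∫ x in b..q, U (a (j + 1) x) x) + cs j * (A - ∫ x in b..q, a (j + 1) x)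
        ≤ ∫ x in b..q, U (h x) x) := by
  have key : ∀ x ∈ Set.Icc b q, ∀ y : ℝ,
      U (a (j + 1) x) x + cs j * (y - a (j + 1) x) ≤ U y x ∧
      (U (a (j + 1) x) x + cs j * (y - a (j + 1) x) = U y x ↔
        a (j + 1) x ≤ y ∧ y ≤ a j x) := by
    intro x hx y
    exact strip_pointwise k (fun i => a i x) cs (fun y => U y x)
      (hUcont.comp (continuous_id.prodMk continuous_const))
      (fun i hi1 hik => hamono i hi1 hik x hx)
      hcs
      (fun y hy => hslope_top x hx y (by omega) hy)
      (fun i hi1 hik y h1 h2 => hslope_mid i hi1 hik x hx y h1 h2)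
      (fun y hy => hslope_bot x hx y (by omega) hy)
      j hj1 hjk y
  have hIcc : Set.uIcc b q = Set.Icc b q := Set.uIcc_of_le hbq.le
  have haj1 : ContinuousOn (a (j + 1)) (Set.Icc b q) := hacont (j + 1) (by omega) (by omega)
  have hUa_cont : ContinuousOn (fun x => U (a (j + 1) x) x) (Set.Icc b q) :=
    hUcont.comp_continuousOn (haj1.prodMk continuousOn_id)
  have hUa_int : IntervalIntegrable (fun x => U (a (j + 1) x) x) volume b q :=
    (hIcc ▸ hUa_cont).intervalIntegrable
  have haj1_int : IntervalIntegrable (a (j + 1)) volume b q :=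
    (hIcc ▸ haj1).intervalIntegrable
  -- the main decomposition, for any admissible h
  have main : ∀ h : ℝ → ℝ, ContinuousOn h (Set.Icc b q) → (∫ x in b..q, h x) = A →
      (∫ x in b..q, U (h x) x)
        - ((∫ x in b..q, U (a (j + 1) x) x) + cs j * (A - ∫ x in b..q, a (j + 1) x))
        = ∫ x in b..q, (U (h x) x - U (a (j + 1) x) x - cs j * (h x - a (j + 1) x)) := by
    intro h hh hA
    have hUh_cont : ContinuousOn (fun x => U (h x) x) (Set.Icc b q) :=
      hUcont.comp_continuousOn (hh.prodMk continuousOn_id)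
    have hUh_int : IntervalIntegrable (fun x => U (h x) x) volume b q :=
      (hIcc ▸ hUh_cont).intervalIntegrable
    have hh_int : IntervalIntegrable h volume b q := (hIcc ▸ hh).intervalIntegrable
    have h3_int : IntervalIntegrable (fun x => cs j * (h x - a (j + 1) x)) volume b q :=
      (hh_int.sub haj1_int).const_mul (cs j)
    rw [intervalIntegral.integral_sub (hUh_int.sub hUa_int) h3_int,
      intervalIntegral.integral_sub hUh_int hUa_int,
      intervalIntegral.integral_const_mul,
      intervalIntegral.integral_sub hh_int haj1_int, hA]
    ring
  have hg_nonneg : ∀ h : ℝ → ℝ, ∀ x ∈ Set.Icc b q,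
      0 ≤ U (h x) x - U (a (j + 1) x) x - cs j * (h x - a (j + 1) x) := by
    intro h x hx
    have := (key x hx (h x)).1
    linarith
  constructor
  · intro h hh hA
    have hmain := main h hh hA
    have hgcont : ContinuousOn
        (fun x => U (h x) x - U (a (j + 1) x) x - cs j * (h x - a (j + 1) x))
        (Set.Icc b q) := by
      have hUh_cont : ContinuousOn (fun x => U (h x) x) (Set.Icc b q) :=
        hUcont.comp_continuousOn (hh.prodMk continuousOn_id)
      exact (hUh_cont.sub hUa_cont).sub ((hh.sub haj1).const_smul (cs j))
    have hgint : IntervalIntegrable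
        (fun x => U (h x) x - U (a (j + 1) x) x - cs j * (h x - a (j + 1) x)) volume b q :=
      (hIcc ▸ hgcont).intervalIntegrable
    constructor
    · intro heq
      have hzero : (∫ x in b..q,
          (U (h x) x - U (a (j + 1) x) x - cs j * (h x - a (j + 1) x))) = 0 := by
        rw [← hmain, heq]; ring
      have hg_nonneg_ae : 0 ≤ᵐ[volume.restrict (Set.Ioc b q)]
          (fun x => U (h x) x - U (a (j + 1) x) x - cs j * (h x - a (j + 1) x)) := by
        filter_upwards [ae_restrict_mem measurableSet_Ioc] with x hx
        exact hg_nonneg h x (Set.Ioc_subset_Icc_self hx)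
      have hae := (intervalIntegral.integral_eq_zero_iff_of_le_of_nonneg_ae hbq.le
        hg_nonneg_ae hgint).mp hzero
      have hres : volume.restrict (Set.Ioc b q) = volume.restrict (Set.Icc b q) :=
        Measure.restrict_congr_set Ioc_ae_eq_Icc
      rw [hres] at hae
      have heqz : Set.EqOn
          (fun x => U (h x) x - U (a (j + 1) x) x - cs j * (h x - a (j + 1) x)) 0
          (Set.Icc b q) :=
        Measure.eqOn_Icc_of_ae_eq volume hbq.ne hae hgcont continuousOn_const
      intro x hx
      have h0 : U (h x) x - U (a (j + 1) x) x - cs j * (h x - a (j + 1) x) = 0 := heqz hx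
      exact (key x hx (h x)).2.mp (by linarith)
    · intro hstrip
      have heqz : Set.EqOn
          (fun x => U (h x) x - U (a (j + 1) x) x - cs j * (h x - a (j + 1) x)) 0
          (Set.uIcc b q) := by
        rw [hIcc]
        intro x hx
        have := (key x hx (h x)).2.mpr (hstrip x hx)
        simp only [Pi.zero_apply]
        linarith
      have hzero : (∫ x in b..q,
          (U (h x) x - U (a (j + 1) x) x - cs j * (h x - a (j + 1) x))) = 0 := by
        rw [intervalIntegral.integral_congr heqz]
        simp
      linarith [hmain, hzero]
  · intro h hh hA
    have hmain := main h hh hA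
    have hpos : 0 ≤ ∫ x in b..q,
        (U (h x) x - U (a (j + 1) x) x - cs j * (h x - a (j + 1) x)) :=
      intervalIntegral.integral_nonneg hbq.le (fun x hx => hg_nonneg h x hx)
    linarith
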